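/- arXiv:2203.02084 — 2 statements merged into one kernel-verified Lean document; each statement's English description precedes it below -/
import Mathlib

section
/- (Theorem 1, single-mode case with cell boundaries not all through the origin.) Let A ∈ ℝ^{n×n}, B ∈ ℝ^{n×p}, C ∈ ℝ^{k×n} define a mode of the concrete PWA system, and F ∈ ℝ^{m×m}, G ∈ ℝ^{m×q}, H ∈ ℝ^{k×m}, L ∈ ℝ^{q×m} define the transformed linear abstraction. Let P ∈ ℝ^{n×m}, Q ∈ ℝ^{p×m} satisfy H = C P and P F = A P + B Q, and let R ∈ ℝ^{p×q}, K ∈ ℝ^{p×n} be interface gains. Set N = n + m, A′ = diag(A + B K, F + G L), Ā = diag(A′, 0) ∈ ℝ^{(N+1)×(N+1)}, C̄ = [C 0 0] ∈ ℝ^{k×(N+1)}, and let M̄ = diag(M, m₀) with M symmetric positive definite N×N and m₀ > 0, Λ̄ = diag(λI_N, 0) with λ > 0, κ > 0. Let Ē be a b×(N+1) matrix and W a symmetric matrix with nonnegative entries, such that M̄ − C̄ᵀC̄ ⪰ 0 and ĀᵀM̄ + M̄Ā + ĒᵀWĒ + Λ̄M̄ ⪯ 0. Suppose x₁ : ℝ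 → ℝⁿ and x₂ : ℝ → ℝᵐ satisfy, for all t ≥ 0: x₁ has derivative A x₁(t) + B u₁(t) + c(t) at t with u₁(t) = R ū₂(t) + (Q + R L) x₂(t) + K(x₁(t) − P x₂(t)); x₂ has derivative (F + G L) x₂(t) + G ū₂(t) at t; the augmented joint state ω̄(t) = (x₁(t) − P x₂(t), x₂(t), 1) ∈ ℝ^{N+1} satisfies Ē ω̄(t) ≥ 0 entrywise; and the vectors v₁(t) = ((B R − P G) L x₂(t), 0), v₂(t) = ((B R − P G) ū₂(t), G ū₂(t)), c′(t) = (c(t), 0) in ℝ^N satisfy √(v₁(t)ᵀMv₁(t)) ≤ β₁, √(v₂(t)ᵀMv₂(t)) ≤ β₂, √(c′(t)ᵀMc′(t)) ≤ β₃. Then for all t ≥ 0, ‖C x₁(t) − H x₂(t)‖ ≤ max( κ·V(ω̄(0)), √m₀ + (2/λ)(β₁ + β₂ + β₃) ), where V(ω̄) = (1/κ)√(ω̄ᵀM̄ω̄). -/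
open Matrix

lemma dot_symm {ι : Type*} [Fintype ι] {M : Matrix ι ι ℝ} (h : Mᵀ = M) (u v : ι → ℝ) :
    u ⬝ᵥ M *ᵥ v = v ⬝ᵥ M *ᵥ u := by
  conv_lhs => rw [← h]
  rw [dotProduct_mulVec, vecMul_transpose, dotProduct_comm]

lemma dot_cs {ι : Type*} [Fintype ι] (u v : ι → ℝ) :
    u ⬝ᵥ v ≤ Real.sqrt (u ⬝ᵥ u) * Real.sqrt (v ⬝ᵥ v) := by
  have h := Finset.sum_mul_sq_le_sq_mul_sq Finset.univ u v
  have h1 : u ⬝ᵥ v ≤ Real.sqrt ((u ⬝ᵥ v) ^ 2) := by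
    rw [Real.sqrt_sq_eq_abs]; exact le_abs_self _
  refine h1.trans ?_
  have huu : (0:ℝ) ≤ u ⬝ᵥ u := by simpa [dotProduct] using Finset.sum_nonneg fun i _ => mul_self_nonneg (u i)
  rw [← Real.sqrt_mul huu]
  apply Real.sqrt_le_sqrt
  calc (u ⬝ᵥ v)^2 = (∑ i, u i * v i)^2 := by rfl
    _ ≤ (∑ i, u i ^ 2) * (∑ i, v i ^ 2) := h
    _ = (u ⬝ᵥ u) * (v ⬝ᵥ v) := by simp [dotProduct, sq]

open scoped MatrixOrder in
lemma psd_cs {ι : Type*} [Fintype ι] [DecidableEq ι] {M : Matrix ι ι ℝ}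
    (hM : M.PosSemidef) (u v : ι → ℝ) :
    u ⬝ᵥ M *ᵥ v ≤ Real.sqrt (u ⬝ᵥ M *ᵥ u) * Real.sqrt (v ⬝ᵥ M *ᵥ v) := by
  set N := CFC.sqrt M with hN
  have hNs : Nᵀ = N := by
    have := (CFC.sqrt_nonneg M).posSemidef.isHermitian
    rwa [Matrix.IsHermitian, conjTranspose_eq_transpose_of_trivial] at this
  have key : ∀ a b : ι → ℝ, a ⬝ᵥ M *ᵥ b = (N *ᵥ a) ⬝ᵥ (N *ᵥ b) := by
    intro a b
    conv_lhs => rw [← CFC.sqrt_mul_sqrt_self M hM.nonneg, ← mulVec_mulVec, dotProduct_mulVec, ← hN, ← hNs, vecMul_transpose]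
    rw [hNs]
  rw [key, key, key]
  exact dot_cs _ _

lemma invariance_aux {f g : ℝ → ℝ} {K : ℝ}
    (hd : ∀ t ≥ (0:ℝ), HasDerivAt f (g t) t)
    (h0 : f 0 ≤ K)
    (hdec : ∀ t ≥ (0:ℝ), K ≤ f t → g t ≤ 0) :
    ∀ t ≥ (0:ℝ), f t ≤ K := by
  intro t₁ ht₁
  by_contra hgt
  push_neg at hgt
  set S : Set ℝ := {t | t ∈ Set.Icc (0:ℝ) t₁ ∧ f t ≤ K} with hS
  have hS0 : (0:ℝ) ∈ S := ⟨⟨le_refl _, ht₁⟩, h0⟩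
  have hSne : S.Nonempty := ⟨0, hS0⟩
  have hSbdd : BddAbove S := ⟨t₁, fun x hx => hx.1.2⟩
  set s := sSup S with hs
  have hs0 : 0 ≤ s := le_csSup hSbdd hS0
  have hst₁ : s ≤ t₁ := csSup_le hSne fun x hx => hx.1.2
  have hfs : f s ≤ K := by
    by_contra hfs
    push_neg at hfs
    have hc : ContinuousAt f s := (hd s hs0).continuousAt
    have hev : ∀ᶠ y in nhds s, K < f y := continuousAt_const.eventually_lt hc hfs
    rw [Metric.eventually_nhds_iff] at hev
    obtain ⟨δ, hδ, hball⟩ := hev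
    obtain ⟨x, hxS, hxgt⟩ := exists_lt_of_lt_csSup hSne (show s - δ < s by linarith)
    have hxle : x ≤ s := le_csSup hSbdd hxS
    have : K < f x := hball (by rw [Real.dist_eq]; rw [abs_lt]; constructor <;> linarith)
    exact absurd hxS.2 (not_le.mpr this)
  have hslt : s < t₁ := lt_of_le_of_ne hst₁ (fun h => by rw [h] at hfs; linarith)
  have hgtK : ∀ u ∈ Set.Ioc s t₁, K < f u := by
    intro u hu
    by_contra hle
    push_neg at hle
    have : u ∈ S := ⟨⟨le_trans hs0 hu.1.le, hu.2⟩, hle⟩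
    exact absurd (le_csSup hSbdd this) (not_le.mpr hu.1)
  have hanti : AntitoneOn f (Set.Icc s t₁) := by
    apply antitoneOn_of_deriv_nonpos (convex_Icc s t₁)
    · exact fun x hx => ((hd x (le_trans hs0 hx.1)).continuousAt).continuousWithinAt
    · rw [interior_Icc]
      exact fun x hx => ((hd x (le_trans hs0 hx.1.le)).differentiableAt).differentiableWithinAt
    · rw [interior_Icc]
      intro x hx
      rw [(hd x (le_trans hs0 hx.1.le)).deriv]
      exact hdec x (le_trans hs0 hx.1.le) (hgtK x ⟨hx.1, hx.2.le⟩).le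
  have := hanti (Set.left_mem_Icc.mpr hst₁) (Set.right_mem_Icc.mpr hst₁) hst₁
  linarith

lemma hasDerivAt_quadratic {ι : Type*} [Fintype ι] {M : Matrix ι ι ℝ} (hMs : Mᵀ = M)
    {f : ℝ → ι → ℝ} {f' : ι → ℝ} {t : ℝ} (hf : ∀ i, HasDerivAt (fun t => f t i) (f' i) t) :
    HasDerivAt (fun t => f t ⬝ᵥ M *ᵥ f t) (2 * (f t ⬝ᵥ M *ᵥ f')) t := by
  have key : HasDerivAt (fun t => ∑ i, ∑ j, f t i * (M i j * f t j))
      (∑ i, ∑ j, (f' i * (M i j * f t j) + f t i * (M i j * f' j))) t := by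
    apply HasDerivAt.fun_sum
    intro i _
    apply HasDerivAt.fun_sum
    intro j _
    exact (hf i).mul ((hf j).const_mul (M i j))
  have e1 : ∀ (u v : ι → ℝ), u ⬝ᵥ M *ᵥ v = ∑ i, ∑ j, u i * (M i j * v j) := by
    intro u v
    simp [dotProduct, Matrix.mulVec, Finset.mul_sum]
  have e2 : (∑ i, ∑ j, (f' i * (M i j * f t j) + f t i * (M i j * f' j)))
      = 2 * (f t ⬝ᵥ M *ᵥ f') := by
    rw [two_mul]
    have : (∑ i, ∑ j, (f' i * (M i j * f t j) + f t i * (M i j * f' j)))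
        = (∑ i, ∑ j, f' i * (M i j * f t j)) + (∑ i, ∑ j, f t i * (M i j * f' j)) := by
      rw [← Finset.sum_add_distrib]
      congr 1; ext i; rw [← Finset.sum_add_distrib]
    rw [this, ← e1, ← e1, dot_symm hMs f' (f t)]
  rw [← e2]
  convert key using 1
  ext t
  exact e1 (f t) (f t)


/-- `aug v = (v, 1)`: the vector obtained by appending the entry `1` to `v`. -/
def aug {α : Type*} (v : α → ℝ) : α ⊕ Unit → ℝ := Sum.elim v fun _ => 1

set_option maxHeartbeats 1000000 in
/-- Theorem 1 of the paper, single-mode case with cell boundaries not all through the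
origin: with the augmented matrices `Ā = diag(A', 0)`, `C̄ = [C 0 0]`,
`M̄ = diag(M, m₀)`, `Λ̄ = diag(λ I_N, 0)` (where `A' = diag(A + B K, F + G L)`),
the LMIs `M̄ - C̄ᵀ C̄ ⪰ 0` and `Āᵀ M̄ + M̄ Ā + Ēᵀ W Ē + Λ̄ M̄ ⪯ 0`, the interface
`u₁ = R ū₂ + (Q + R L) x₂ + K (x₁ - P x₂)`, the augmented joint state
`ω̄ = (x₁ - P x₂, x₂, 1)` remaining in the cell `Ē ω̄ ≥ 0`, and the bounds
`β₁, β₂, β₃` on the `M`-weighted norms of `v₁, v₂, c'`, the output error satisfies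
`‖C x₁(t) - H x₂(t)‖ ≤ max (κ V(ω̄(0))) (√m₀ + (2/λ)(β₁ + β₂ + β₃))` for all `t ≥ 0`,
where `V(ω̄) = (1/κ)√(ω̄ᵀM̄ω̄)`. -/
theorem stmt_13 {n m p q k b : ℕ}
    (A : Matrix (Fin n) (Fin n) ℝ) (B : Matrix (Fin n) (Fin p) ℝ)
    (C : Matrix (Fin k) (Fin n) ℝ)
    (F : Matrix (Fin m) (Fin m) ℝ) (G : Matrix (Fin m) (Fin q) ℝ)
    (H : Matrix (Fin k) (Fin m) ℝ) (L : Matrix (Fin q) (Fin m) ℝ)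
    (P : Matrix (Fin n) (Fin m) ℝ) (Q : Matrix (Fin p) (Fin m) ℝ)
    (R : Matrix (Fin p) (Fin q) ℝ) (K : Matrix (Fin p) (Fin n) ℝ)
    (hH : H = C * P) (hPF : P * F = A * P + B * Q)
    (M : Matrix (Fin n ⊕ Fin m) (Fin n ⊕ Fin m) ℝ) (hM : M.PosDef)
    (m₀ lam κ : ℝ) (hm₀ : 0 < m₀) (hlam : 0 < lam) (hκ : 0 < κ)
    (Ebar : Matrix (Fin b) ((Fin n ⊕ Fin m) ⊕ Unit) ℝ)
    (W : Matrix (Fin b) (Fin b) ℝ) (hW : W.IsSymm) (hWpos : ∀ i j, 0 ≤ W i j)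
    (hCLMI : (Matrix.fromBlocks M 0 0 (Matrix.of fun _ _ => m₀)
        - (Matrix.fromCols (Matrix.fromCols C 0) 0 :
            Matrix (Fin k) ((Fin n ⊕ Fin m) ⊕ Unit) ℝ)ᵀ
          * (Matrix.fromCols (Matrix.fromCols C 0) 0 :
            Matrix (Fin k) ((Fin n ⊕ Fin m) ⊕ Unit) ℝ)).PosSemidef)
    (hLMI : (-((Matrix.fromBlocks
            (Matrix.fromBlocks (A + B * K) 0 0 (F + G * L)) 0 0 0)ᵀ
          * Matrix.fromBlocks M 0 0 (Matrix.of fun _ _ => m₀)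
        + Matrix.fromBlocks M 0 0 (Matrix.of fun _ _ => m₀)
          * Matrix.fromBlocks (Matrix.fromBlocks (A + B * K) 0 0 (F + G * L)) 0 0 0
        + Ebarᵀ * W * Ebar
        + Matrix.fromBlocks (lam • (1 : Matrix (Fin n ⊕ Fin m) (Fin n ⊕ Fin m) ℝ)) 0 0 0
          * Matrix.fromBlocks M 0 0 (Matrix.of fun _ _ => m₀))).PosSemidef)
    (x₁ : ℝ → Fin n → ℝ) (x₂ : ℝ → Fin m → ℝ)
    (u₁ : ℝ → Fin p → ℝ) (ubar₂ : ℝ → Fin q → ℝ) (c : ℝ → Fin n → ℝ)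
    (β₁ β₂ β₃ : ℝ)
    (hx₁ : ∀ t ≥ (0 : ℝ), HasDerivAt x₁ (A *ᵥ x₁ t + B *ᵥ u₁ t + c t) t)
    (hu₁ : ∀ t ≥ (0 : ℝ),
      u₁ t = R *ᵥ ubar₂ t + (Q + R * L) *ᵥ x₂ t + K *ᵥ (x₁ t - P *ᵥ x₂ t))
    (hx₂ : ∀ t ≥ (0 : ℝ), HasDerivAt x₂ ((F + G * L) *ᵥ x₂ t + G *ᵥ ubar₂ t) t)
    (hcell : ∀ t ≥ (0 : ℝ),
      ∀ i, 0 ≤ (Ebar *ᵥ aug (Sum.elim (x₁ t - P *ᵥ x₂ t) (x₂ t))) i)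
    (hβ₁ : ∀ t ≥ (0 : ℝ),
      Real.sqrt (Sum.elim ((B * R - P * G) *ᵥ (L *ᵥ x₂ t)) 0 ⬝ᵥ
        M *ᵥ Sum.elim ((B * R - P * G) *ᵥ (L *ᵥ x₂ t)) 0) ≤ β₁)
    (hβ₂ : ∀ t ≥ (0 : ℝ),
      Real.sqrt (Sum.elim ((B * R - P * G) *ᵥ ubar₂ t) (G *ᵥ ubar₂ t) ⬝ᵥ
        M *ᵥ Sum.elim ((B * R - P * G) *ᵥ ubar₂ t) (G *ᵥ ubar₂ t)) ≤ β₂)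
    (hβ₃ : ∀ t ≥ (0 : ℝ),
      Real.sqrt (Sum.elim (c t) 0 ⬝ᵥ M *ᵥ Sum.elim (c t) 0) ≤ β₃) :
    ∀ t ≥ (0 : ℝ),
      ‖(EuclideanSpace.equiv (Fin k) ℝ).symm (C *ᵥ x₁ t - H *ᵥ x₂ t)‖ ≤
        max (κ * ((1 / κ) * Real.sqrt (aug (Sum.elim (x₁ 0 - P *ᵥ x₂ 0) (x₂ 0)) ⬝ᵥ
            Matrix.fromBlocks M 0 0 (Matrix.of fun _ _ => m₀) *ᵥ
              aug (Sum.elim (x₁ 0 - P *ᵥ x₂ 0) (x₂ 0)))))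
          (Real.sqrt m₀ + (2 / lam) * (β₁ + β₂ + β₃)) := by

  -- abbreviations
  set Mb := Matrix.fromBlocks M 0 0 (Matrix.of fun _ _ => m₀) with hMbdef
  set Cb := (Matrix.fromCols (Matrix.fromCols C 0) 0 :
      Matrix (Fin k) ((Fin n ⊕ Fin m) ⊕ Unit) ℝ) with hCbdef
  set A2 := Matrix.fromBlocks (A + B * K) 0 0 (F + G * L) with hA2def
  set sv : ℝ → (Fin n ⊕ Fin m) → ℝ :=
    fun t => Sum.elim (x₁ t - P *ᵥ x₂ t) (x₂ t) with hsvdef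
  set xd : ℝ → Fin m → ℝ := fun t => (F + G * L) *ᵥ x₂ t + G *ᵥ ubar₂ t with hxddef
  set ed : ℝ → Fin n → ℝ := fun t => (A + B * K) *ᵥ (x₁ t - P *ᵥ x₂ t)
      + (B * R - P * G) *ᵥ (L *ᵥ x₂ t) + (B * R - P * G) *ᵥ ubar₂ t + c t with heddef
  set svd : ℝ → (Fin n ⊕ Fin m) → ℝ := fun t => Sum.elim (ed t) (xd t) with hsvddef
  set v1 : ℝ → (Fin n ⊕ Fin m) → ℝ :=
    fun t => Sum.elim ((B * R - P * G) *ᵥ (L *ᵥ x₂ t)) 0 with hv1def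
  set v2 : ℝ → (Fin n ⊕ Fin m) → ℝ :=
    fun t => Sum.elim ((B * R - P * G) *ᵥ ubar₂ t) (G *ᵥ ubar₂ t) with hv2def
  set cv : ℝ → (Fin n ⊕ Fin m) → ℝ := fun t => Sum.elim (c t) 0 with hcvdef
  set ω : ℝ → ((Fin n ⊕ Fin m) ⊕ Unit) → ℝ := fun t => aug (sv t) with hωdef
  set Wf : ℝ → ℝ := fun t => sv t ⬝ᵥ M *ᵥ sv t + m₀ with hWfdef
  have hMsymm : Mᵀ = M := by
    have h := hM.posSemidef.isHermitian
    rwa [Matrix.IsHermitian, conjTranspose_eq_transpose_of_trivial] at h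
  have hMbsymm : Mbᵀ = Mb := by
    rw [hMbdef]
    rw [Matrix.fromBlocks_transpose]
    simp [hMsymm]
    ext i j
    rfl
  -- basic quadratic form facts
  have hω_elim : ∀ t, ω t = Sum.elim (sv t) (fun _ => (1:ℝ)) := fun t => rfl
  have hMb_mulVec : ∀ (u : (Fin n ⊕ Fin m) → ℝ) (z : Unit → ℝ),
      Mb *ᵥ Sum.elim u z = Sum.elim (M *ᵥ u) (fun _ => m₀ * z ()) := by
    intro u z
    rw [hMbdef, Matrix.fromBlocks_mulVec]
    simp only [Matrix.zero_mulVec, add_zero, zero_add]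
    funext x
    cases x with
    | inl i => rfl
    | inr u => simp [Matrix.mulVec, dotProduct, Finset.univ_unique]
  have hdot_elim : ∀ (u x : (Fin n ⊕ Fin m) → ℝ) (a b : Unit → ℝ),
      Sum.elim u a ⬝ᵥ Sum.elim x b = u ⬝ᵥ x + a () * b () := by
    intro u x a b
    rw [sumElim_dotProduct_sumElim]
    simp [dotProduct]
  have hWeq : ∀ t, ω t ⬝ᵥ Mb *ᵥ ω t = Wf t := by
    intro t
    rw [hω_elim, hMb_mulVec, hdot_elim]
    simp [hWfdef]
  have hωMbelim0 : ∀ (t : ℝ) (w : (Fin n ⊕ Fin m) → ℝ),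
      ω t ⬝ᵥ Mb *ᵥ Sum.elim w (fun _ => (0:ℝ)) = sv t ⬝ᵥ M *ᵥ w := by
    intro t w
    rw [hω_elim, hMb_mulVec, hdot_elim]
    simp
  -- derivative of the state
  have hvec : ∀ t ≥ (0:ℝ), A *ᵥ x₁ t + B *ᵥ u₁ t + c t - P *ᵥ xd t = ed t := by
    intro t ht
    rw [hu₁ t ht, heddef, hxddef]
    have hPF' : ∀ v : Fin m → ℝ, (P * F) *ᵥ v = (A * P) *ᵥ v + (B * Q) *ᵥ v := by
      intro v; rw [hPF, Matrix.add_mulVec]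
    simp only [Matrix.mulVec_add, Matrix.mulVec_sub, Matrix.add_mulVec, Matrix.sub_mulVec,
      Matrix.mulVec_mulVec, Matrix.mul_add, Matrix.mul_sub, Matrix.add_mul, Matrix.sub_mul,
      Matrix.mul_assoc, hPF']
    abel
  have hsd : ∀ t ≥ (0:ℝ), ∀ i, HasDerivAt (fun τ => sv τ i) (svd t i) t := by
    intro t ht i
    have h2 := hasDerivAt_pi.mp (hx₂ t ht)
    cases i with
    | inl j =>
      have hP : HasDerivAt (fun τ => (P *ᵥ x₂ τ) j) ((P *ᵥ xd t) j) t := by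
        simp only [Matrix.mulVec, dotProduct]
        exact HasDerivAt.fun_sum fun l _ => (h2 l).const_mul (P j l)
      have h1 := hasDerivAt_pi.mp (hx₁ t ht) j
      have h3 := h1.sub hP
      have hval : (A *ᵥ x₁ t + B *ᵥ u₁ t + c t) j - (P *ᵥ xd t) j = svd t (Sum.inl j) := by
        have := congrFun (hvec t ht) j
        simpa [hsvddef] using this
      rw [← hval]
      exact h3
    | inr j => exact h2 j
  have hWd : ∀ t ≥ (0:ℝ), HasDerivAt Wf (2 * (sv t ⬝ᵥ M *ᵥ svd t)) t := by
    intro t ht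
    exact (hasDerivAt_quadratic hMsymm (hsd t ht)).add_const m₀
  -- structure of the derivative
  have hsvd_eq : ∀ t, svd t = A2 *ᵥ sv t + v1 t + v2 t + cv t := by
    intro t
    rw [hsvddef, hA2def, hsvdef, hv1def, hv2def, hcvdef, heddef, hxddef]
    simp only [Matrix.fromBlocks_mulVec, Matrix.zero_mulVec, add_zero, zero_add]
    funext i
    cases i <;> simp <;> abel
  -- LMI consequence
  have hA2bound : ∀ t ≥ (0:ℝ),
      2 * (sv t ⬝ᵥ M *ᵥ (A2 *ᵥ sv t)) ≤ -lam * (sv t ⬝ᵥ M *ᵥ sv t) := by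
    intro t ht
    set Ab := Matrix.fromBlocks A2 0 0 (0 : Matrix Unit Unit ℝ) with hAbdef
    set Lb := Matrix.fromBlocks (lam • (1 : Matrix (Fin n ⊕ Fin m) (Fin n ⊕ Fin m) ℝ)) 0 0
      (0 : Matrix Unit Unit ℝ) with hLbdef
    have hkey := hLMI.dotProduct_mulVec_nonneg (ω t)
    simp only [star_trivial, Matrix.neg_mulVec, dotProduct_neg, le_neg, neg_zero] at hkey
    -- hkey : ω t ⬝ᵥ (Abᵀ*Mb + Mb*Ab + Ebarᵀ*W*Ebar + Lb*Mb) *ᵥ ω t ≤ 0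
    have hAbω : Ab *ᵥ ω t = Sum.elim (A2 *ᵥ sv t) (fun _ => (0:ℝ)) := by
      rw [hω_elim, hAbdef, Matrix.fromBlocks_mulVec]
      simp only [Matrix.zero_mulVec, Matrix.mulVec_zero, add_zero, zero_add]
      rfl
    have hq1 : ω t ⬝ᵥ (Abᵀ * Mb) *ᵥ ω t = sv t ⬝ᵥ M *ᵥ (A2 *ᵥ sv t) := by
      rw [← Matrix.mulVec_mulVec, Matrix.dotProduct_mulVec _ (Abᵀ), Matrix.vecMul_transpose,
        hAbω]
      rw [dot_symm hMbsymm, hωMbelim0]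
    have hq2 : ω t ⬝ᵥ (Mb * Ab) *ᵥ ω t = sv t ⬝ᵥ M *ᵥ (A2 *ᵥ sv t) := by
      rw [← Matrix.mulVec_mulVec, hAbω, hωMbelim0]
    have hq3 : 0 ≤ ω t ⬝ᵥ (Ebarᵀ * W * Ebar) *ᵥ ω t := by
      have hE : ∀ i, 0 ≤ (Ebar *ᵥ ω t) i := hcell t ht
      rw [Matrix.mul_assoc, ← Matrix.mulVec_mulVec, ← Matrix.mulVec_mulVec,
        Matrix.dotProduct_mulVec _ (Ebarᵀ), Matrix.vecMul_transpose]
      simp only [dotProduct, Matrix.mulVec]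
      apply Finset.sum_nonneg
      intro i _
      apply mul_nonneg (hE i)
      apply Finset.sum_nonneg
      intro j _
      exact mul_nonneg (hWpos i j) (hE j)
    have hq4 : ω t ⬝ᵥ (Lb * Mb) *ᵥ ω t = lam * (sv t ⬝ᵥ M *ᵥ sv t) := by
      have hLbMb : Lb * Mb = Matrix.fromBlocks (lam • M) 0 0 0 := by
        rw [hLbdef, hMbdef, Matrix.fromBlocks_multiply]
        simp [Matrix.smul_mul]
      rw [hLbMb, hω_elim, Matrix.fromBlocks_mulVec]
      simp only [Matrix.zero_mulVec, add_zero, zero_add]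
      rw [hdot_elim]
      simp [Matrix.smul_mulVec, dotProduct_smul]
    have hexp : ω t ⬝ᵥ (Abᵀ * Mb + Mb * Ab + Ebarᵀ * W * Ebar + Lb * Mb) *ᵥ ω t
        = ω t ⬝ᵥ (Abᵀ * Mb) *ᵥ ω t + ω t ⬝ᵥ (Mb * Ab) *ᵥ ω t
          + ω t ⬝ᵥ (Ebarᵀ * W * Ebar) *ᵥ ω t + ω t ⬝ᵥ (Lb * Mb) *ᵥ ω t := by
      simp [Matrix.add_mulVec, dotProduct_add]
    rw [hexp, hq1, hq2, hq4] at hkey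
    linarith
  -- cross terms
  have hqs_nonneg : ∀ t, 0 ≤ sv t ⬝ᵥ M *ᵥ sv t := by
    intro t
    have := hM.posSemidef.dotProduct_mulVec_nonneg (sv t)
    simpa using this
  have hcross : ∀ t ≥ (0:ℝ),
      sv t ⬝ᵥ M *ᵥ v1 t ≤ Real.sqrt (sv t ⬝ᵥ M *ᵥ sv t) * β₁ ∧
      sv t ⬝ᵥ M *ᵥ v2 t ≤ Real.sqrt (sv t ⬝ᵥ M *ᵥ sv t) * β₂ ∧
      sv t ⬝ᵥ M *ᵥ cv t ≤ Real.sqrt (sv t ⬝ᵥ M *ᵥ sv t) * β₃ := by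
    intro t ht
    refine ⟨?_, ?_, ?_⟩
    · exact (psd_cs hM.posSemidef _ _).trans
        (mul_le_mul_of_nonneg_left (hβ₁ t ht) (Real.sqrt_nonneg _))
    · exact (psd_cs hM.posSemidef _ _).trans
        (mul_le_mul_of_nonneg_left (hβ₂ t ht) (Real.sqrt_nonneg _))
    · exact (psd_cs hM.posSemidef _ _).trans
        (mul_le_mul_of_nonneg_left (hβ₃ t ht) (Real.sqrt_nonneg _))
  have hβ₁nn : 0 ≤ β₁ := le_trans (Real.sqrt_nonneg _) (hβ₁ 0 le_rfl)
  have hβ₂nn : 0 ≤ β₂ := le_trans (Real.sqrt_nonneg _) (hβ₂ 0 le_rfl)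
  have hβ₃nn : 0 ≤ β₃ := le_trans (Real.sqrt_nonneg _) (hβ₃ 0 le_rfl)
  set τ : ℝ := Real.sqrt m₀ + 2 / lam * (β₁ + β₂ + β₃) with hτdef
  have hτnn : 0 ≤ τ := by positivity
  set Kc : ℝ := max (Real.sqrt (Wf 0)) τ with hKcdef
  have hKcnn : 0 ≤ Kc := le_trans hτnn (le_max_right _ _)
  have hWfpos : ∀ t, 0 < Wf t := fun t => by
    have := hqs_nonneg t
    rw [hWfdef]; dsimp only; linarith
  -- the decrease condition
  have hdec : ∀ t ≥ (0:ℝ), Kc ^ 2 ≤ Wf t → 2 * (sv t ⬝ᵥ M *ᵥ svd t) ≤ 0 := by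
    intro t ht hKW
    obtain ⟨hc1, hc2, hc3⟩ := hcross t ht
    have hA2b := hA2bound t ht
    set qs := sv t ⬝ᵥ M *ᵥ sv t with hqsdef
    have hsplit : sv t ⬝ᵥ M *ᵥ svd t
        = sv t ⬝ᵥ M *ᵥ (A2 *ᵥ sv t) + sv t ⬝ᵥ M *ᵥ v1 t + sv t ⬝ᵥ M *ᵥ v2 t
          + sv t ⬝ᵥ M *ᵥ cv t := by
      rw [hsvd_eq t]
      simp [Matrix.mulVec_add, dotProduct_add]
    set V := Real.sqrt (Wf t) with hVdef
    have hV2 : V ^ 2 = Wf t := Real.sq_sqrt (hWfpos t).le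
    have hqsV : Real.sqrt qs ≤ V := by
      apply Real.sqrt_le_sqrt
      rw [hWfdef]; dsimp only; rw [← hqsdef]; linarith
    have hVK : Kc ≤ V := by
      calc Kc = Real.sqrt (Kc ^ 2) := (Real.sqrt_sq hKcnn).symm
        _ ≤ V := Real.sqrt_le_sqrt hKW
    have hτV : τ ≤ V := le_trans (le_max_right _ _) hVK
    have hqs_eq : qs = V ^ 2 - m₀ := by
      rw [hV2, hWfdef]; dsimp only; rw [← hqsdef]; ring
    have hsq : Real.sqrt m₀ ^ 2 = m₀ := Real.sq_sqrt hm₀.le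
    have hsmnn : 0 ≤ Real.sqrt m₀ := Real.sqrt_nonneg _
    have hqsnn := hqs_nonneg t
    have hsqrtqs_nn : 0 ≤ Real.sqrt qs := Real.sqrt_nonneg _
    have hbound : 2 * (sv t ⬝ᵥ M *ᵥ svd t)
        ≤ -lam * (V ^ 2 - m₀) + 2 * V * (β₁ + β₂ + β₃) := by
      rw [hsplit]
      have h1 : sv t ⬝ᵥ M *ᵥ v1 t ≤ V * β₁ :=
        hc1.trans (mul_le_mul_of_nonneg_right hqsV hβ₁nn)
      have h2 : sv t ⬝ᵥ M *ᵥ v2 t ≤ V * β₂ :=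
        hc2.trans (mul_le_mul_of_nonneg_right hqsV hβ₂nn)
      have h3 : sv t ⬝ᵥ M *ᵥ cv t ≤ V * β₃ :=
        hc3.trans (mul_le_mul_of_nonneg_right hqsV hβ₃nn)
      rw [← hqs_eq]
      linarith
    refine hbound.trans ?_
    have hVτ' : Real.sqrt m₀ + 2 / lam * (β₁ + β₂ + β₃) ≤ V := hτV
    have hβs : (0:ℝ) ≤ β₁ + β₂ + β₃ := by linarith
    have h1 : 2 / lam * (β₁ + β₂ + β₃) ≤ V - Real.sqrt m₀ := by linarith
    have h2 : 2 * (β₁ + β₂ + β₃) ≤ lam * (V - Real.sqrt m₀) := by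
      have := mul_le_mul_of_nonneg_left h1 hlam.le
      calc 2 * (β₁ + β₂ + β₃) = lam * (2 / lam * (β₁ + β₂ + β₃)) := by
            field_simp
          _ ≤ lam * (V - Real.sqrt m₀) := this
    have h3 : 0 ≤ V - Real.sqrt m₀ := le_trans (by positivity) h1
    have h4 : 0 ≤ V + Real.sqrt m₀ := by linarith
    have h5 := mul_le_mul_of_nonneg_right h2 h4
    have h6 : lam * (Real.sqrt m₀ ^ 2) = lam * m₀ := by rw [hsq]
    nlinarith [h5, h6, mul_nonneg hβs hsmnn]
  -- invariance
  have hWbound : ∀ t ≥ (0:ℝ), Wf t ≤ Kc ^ 2 := by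
    apply invariance_aux hWd
    · have h0 : Real.sqrt (Wf 0) ≤ Kc := le_max_left _ _
      calc Wf 0 = Real.sqrt (Wf 0) ^ 2 := (Real.sq_sqrt (hWfpos 0).le).symm
        _ ≤ Kc ^ 2 := by
          apply pow_le_pow_left₀ (Real.sqrt_nonneg _) h0
    · exact hdec
  -- conclusion
  intro t ht
  have herr : C *ᵥ x₁ t - H *ᵥ x₂ t = C *ᵥ (x₁ t - P *ᵥ x₂ t) := by
    rw [hH, Matrix.mulVec_sub, Matrix.mulVec_mulVec]
  have hCbω : Cb *ᵥ ω t = C *ᵥ (x₁ t - P *ᵥ x₂ t) := by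
    rw [hω_elim, hCbdef, Matrix.fromCols_mulVec_sumElim,
      Matrix.fromCols_mulVec_sumElim]
    simp [Matrix.zero_mulVec]
  have hout : (C *ᵥ (x₁ t - P *ᵥ x₂ t)) ⬝ᵥ (C *ᵥ (x₁ t - P *ᵥ x₂ t)) ≤ Wf t := by
    have hkey := hCLMI.dotProduct_mulVec_nonneg (ω t)
    simp only [star_trivial] at hkey
    rw [Matrix.sub_mulVec, dotProduct_sub, ← Matrix.mulVec_mulVec,
      Matrix.dotProduct_mulVec _ (Cbᵀ), Matrix.vecMul_transpose, hCbω, sub_nonneg] at hkey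
    calc (C *ᵥ (x₁ t - P *ᵥ x₂ t)) ⬝ᵥ (C *ᵥ (x₁ t - P *ᵥ x₂ t)) ≤ ω t ⬝ᵥ Mb *ᵥ ω t := hkey
      _ = Wf t := hWeq t
  have hnorm : ‖(EuclideanSpace.equiv (Fin k) ℝ).symm (C *ᵥ x₁ t - H *ᵥ x₂ t)‖
      = Real.sqrt ((C *ᵥ (x₁ t - P *ᵥ x₂ t)) ⬝ᵥ (C *ᵥ (x₁ t - P *ᵥ x₂ t))) := by
    rw [EuclideanSpace.norm_eq, herr]
    congr 1
    simp [dotProduct, Real.norm_eq_abs, sq_abs, sq]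
  have hRHS : max (κ * ((1 / κ) * Real.sqrt (aug (Sum.elim (x₁ 0 - P *ᵥ x₂ 0) (x₂ 0)) ⬝ᵥ
      Mb *ᵥ aug (Sum.elim (x₁ 0 - P *ᵥ x₂ 0) (x₂ 0))))) τ = Kc := by
    rw [hKcdef]
    congr 1
    have h1 : aug (Sum.elim (x₁ 0 - P *ᵥ x₂ 0) (x₂ 0)) = ω 0 := rfl
    rw [h1, hWeq 0]
    field_simp
  rw [hnorm]
  calc Real.sqrt ((C *ᵥ (x₁ t - P *ᵥ x₂ t)) ⬝ᵥ (C *ᵥ (x₁ t - P *ᵥ x₂ t)))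
      ≤ Real.sqrt (Kc ^ 2) := Real.sqrt_le_sqrt (hout.trans (hWbound t ht))
    _ = Kc := Real.sqrt_sq hKcnn
    _ = max (κ * ((1 / κ) * Real.sqrt (aug (Sum.elim (x₁ 0 - P *ᵥ x₂ 0) (x₂ 0)) ⬝ᵥ
        Mb *ᵥ aug (Sum.elim (x₁ 0 - P *ᵥ x₂ 0) (x₂ 0))))) τ := hRHS.symm
end

section
/- (Theorem 2, single mode-pair case: PWA system simulated by a PWA abstraction.) Let A ∈ ℝ^{n×n}, B ∈ ℝ^{n×p}, C ∈ ℝ^{k×n} define one mode of the concrete PWA system with polyhedral cell {x : E x ≥ f} (E ∈ ℝ^{b×n}, f ∈ ℝ^b), and let F ∈ ℝ^{m×m}, G ∈ ℝ^{m×q}, H ∈ ℝ^{k×m}, L ∈ ℝ^{q×m} define one mode of the transformed PWA abstraction, active on the region described in the concrete state space by {x : E_c x ≥ f_c} (E_c ∈ ℝ^{l×n}, f_c ∈ ℝ^l). Let P ∈ ℝ^{n×m}, Q ∈ ℝ^{p×m} satisfy H = C P and P F = A P + B Q, and let R ∈ ℝ^{p×q}, K ∈ ℝ^{p×n} be interface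 gains. Set N = n + m, A′ = diag(A + B K, F + G L), Ā = diag(A′, 0) ∈ ℝ^{(N+1)×(N+1)}, C̄ = [C 0 0] ∈ ℝ^{k×(N+1)}, and let the joint cell bounding be the (b+l)×(N+1) block matrix Ē with rows [E, E P, −f] and [E_c, E_c P, −f_c]. Let M̄ = diag(M, m₀) with M symmetric positive definite N×N, m₀ > 0, and Λ̄ = diag(λI_N, 0) with λ > 0, κ > 0, and let W be a symmetric (b+l)×(b+l) matrix with nonnegative entries, such that M̄ − C̄ᵀC̄ ⪰ 0 and ĀᵀM̄ + M̄Ā + ĒᵀWĒ + Λ̄M̄ ⪯ 0. Suppose x₁ : ℝ → ℝⁿ and x₂ : ℝ → ℝᵐ satisfy, for all t ≥ 0: x₁ has derivative A x₁(t) + B u₁(t) + c(t) at t with the interface u₁(t) = R ū₂(t) + (Q + R L) x₂(t) + K(x₁(t) − P x₂(t)); x₂ has derivative (F + G L) x₂(t) + G ū₂(t) at t; E x₁(t) ≥ f and E_c x₁(t) ≥ f_c entrywise; and the vectors v₁(t) = ((B R − P G) L x₂(t), 0), v₂(t) = ((B R − P G) ū₂(t), G ū₂(t)), c′(t) = (c(t),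 0) in ℝ^N satisfy √(v₁(t)ᵀMv₁(t)) ≤ β₁, √(v₂(t)ᵀMv₂(t)) ≤ β₂, √(c′(t)ᵀMc′(t)) ≤ β₃. Then for all t ≥ 0, ‖C x₁(t) − H x₂(t)‖ ≤ max( κ·V(ω̄(0)), √m₀ + (2/λ)(β₁ + β₂ + β₃) ), where ω̄(t) = (x₁(t) − P x₂(t), x₂(t), 1) and V(ω̄) = (1/κ)√(ω̄ᵀM̄ω̄). -/
open Matrix

lemma aux_dot_nonneg {ι : Type*} [Fintype ι] {M : Matrix ι ι ℝ} (hM : M.PosSemidef)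
    (x : ι → ℝ) : 0 ≤ x ⬝ᵥ M *ᵥ x := by
  simpa using hM.dotProduct_mulVec_nonneg x

lemma dot_swap {ι κ : Type*} [Fintype ι] [Fintype κ] (S : Matrix ι κ ℝ) (u : ι → ℝ)
    (v : κ → ℝ) : u ⬝ᵥ S *ᵥ v = v ⬝ᵥ Sᵀ *ᵥ u := by
  rw [Matrix.dotProduct_mulVec, ← Matrix.mulVec_transpose, dotProduct_comm]

lemma aux_transpose_quad {ι : Type*} [Fintype ι] (S : Matrix ι ι ℝ) (x : ι → ℝ) :
    x ⬝ᵥ Sᵀ *ᵥ x = x ⬝ᵥ S *ᵥ x := (dot_swap Sᵀ x x).trans (by rw [Matrix.transpose_transpose])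

lemma sum_elim_add {α β : Type*} (f g : α → ℝ) (h k : β → ℝ) :
    Sum.elim f h + Sum.elim g k = Sum.elim (f + g) (h + k) := by
  funext i; cases i <;> rfl

lemma aug_quad {ι : Type*} [Fintype ι] (M : Matrix ι ι ℝ) (m₀ : ℝ) (v : ι → ℝ) :
    aug v ⬝ᵥ (Matrix.fromBlocks M 0 0 (Matrix.of fun _ _ => m₀)) *ᵥ aug v
      = v ⬝ᵥ M *ᵥ v + m₀ := by
  simp [aug, Matrix.fromBlocks_mulVec, sumElim_dotProduct_sumElim, Matrix.mulVec,
    dotProduct]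

lemma dotW_nonneg {ι : Type*} [Fintype ι] {W : Matrix ι ι ℝ} (hW : ∀ i j, 0 ≤ W i j)
    {u : ι → ℝ} (hu : ∀ i, 0 ≤ u i) : 0 ≤ u ⬝ᵥ W *ᵥ u :=
  Finset.sum_nonneg fun i _ => mul_nonneg (hu i) <|
    Finset.sum_nonneg fun j _ => mul_nonneg (hW i j) (hu j)

lemma aux_cs {ι : Type*} [Fintype ι] [DecidableEq ι] {M : Matrix ι ι ℝ} (hM : M.PosSemidef)
    (x y : ι → ℝ) :
    x ⬝ᵥ M *ᵥ y ≤ Real.sqrt (x ⬝ᵥ M *ᵥ x) * Real.sqrt (y ⬝ᵥ M *ᵥ y) := by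
  have hsym : y ⬝ᵥ M *ᵥ x = x ⬝ᵥ M *ᵥ y := by
    have hMt : Mᵀ = M := by
      ext i j
      simpa using hM.1.apply i j
    rw [dot_swap, hMt]
  set a := x ⬝ᵥ M *ᵥ x with ha_def
  set b := x ⬝ᵥ M *ᵥ y with hb_def
  set c := y ⬝ᵥ M *ᵥ y with hc_def
  have hq : ∀ s : ℝ, 0 ≤ a - 2 * s * b + s ^ 2 * c := by
    intro s
    have h := aux_dot_nonneg hM (x - s • y)
    have e : (x - s • y) ⬝ᵥ M *ᵥ (x - s • y) = a - 2 * s * b + s ^ 2 * c := by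
      simp only [Matrix.mulVec_sub, Matrix.mulVec_smul, sub_dotProduct, dotProduct_sub,
        smul_dotProduct, dotProduct_smul, smul_eq_mul]
      rw [hsym]; ring
    linarith
  have ha : 0 ≤ a := aux_dot_nonneg hM x
  have hc : 0 ≤ c := aux_dot_nonneg hM y
  have hb2 : b ^ 2 ≤ a * c := by
    rcases hc.lt_or_eq with hc' | hc'
    · have h := hq (b / c)
      have e2 : a * c - b ^ 2 = c * (a - 2 * (b / c) * b + (b / c) ^ 2 * c) := by
        field_simp
        ring
      nlinarith [mul_nonneg hc h]
    · by_contra hne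
      have hb : b ≠ 0 := by
        intro hb0
        rw [hb0, ← hc'] at hne
        norm_num at hne
      have h := hq ((a + 1) / (2 * b))
      rw [← hc'] at h
      have e3 : 2 * ((a + 1) / (2 * b)) * b = a + 1 := by field_simp
      nlinarith
  calc b ≤ Real.sqrt (b ^ 2) := by rw [Real.sqrt_sq_eq_abs]; exact le_abs_self b
    _ ≤ Real.sqrt (a * c) := Real.sqrt_le_sqrt hb2
    _ = Real.sqrt a * Real.sqrt c := Real.sqrt_mul ha c

lemma comparison {q q' : ℝ → ℝ} {T lam β m₀ : ℝ} (hT : 0 ≤ T)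
    (hlam : 0 < lam) (hβ : 0 ≤ β) (hm₀ : 0 < m₀)
    (hderiv : ∀ t ∈ Set.Icc 0 T, HasDerivAt q (q' t) t)
    (hq0 : ∀ t ∈ Set.Icc 0 T, 0 ≤ q t)
    (hineq : ∀ t ∈ Set.Icc 0 T, q' t ≤ -lam * q t + 2 * Real.sqrt (q t) * β) :
    Real.sqrt (q T + m₀) ≤ max (Real.sqrt (q 0 + m₀)) (Real.sqrt m₀ + (2/lam) * β) := by
  set Vmax := max (Real.sqrt (q 0 + m₀)) (Real.sqrt m₀ + (2/lam) * β) with hV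
  have hD : Real.sqrt m₀ + (2/lam) * β ≤ Vmax := le_max_right _ _
  have hVpos : 0 < Vmax := lt_of_lt_of_le (by positivity) hD
  have hTmem : T ∈ Set.Icc (0:ℝ) T := Set.right_mem_Icc.2 hT
  have h0mem : (0:ℝ) ∈ Set.Icc (0:ℝ) T := Set.left_mem_Icc.2 hT
  have key : ∀ ε > (0:ℝ), q T ≤ Vmax^2 - m₀ + ε := by
    intro ε hε
    have main := image_le_of_deriv_right_lt_deriv_boundary (f := q) (f' := q') (a := 0) (b := T)
      (B := fun _ => Vmax^2 - m₀ + ε) (B' := fun _ => 0)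
      (fun t ht => (hderiv t ht).continuousAt.continuousWithinAt)
      (fun t ht => (hderiv t (Set.Ico_subset_Icc_self ht)).hasDerivWithinAt)
      ?ha (fun _ => hasDerivAt_const _ _) ?bound
    · exact main hTmem
    case ha =>
      show q 0 ≤ Vmax^2 - m₀ + ε
      have h1 : 0 ≤ q 0 + m₀ := by linarith [hq0 0 h0mem]
      have h2 : Real.sqrt (q 0 + m₀) ≤ Vmax := le_max_left _ _
      nlinarith [Real.sq_sqrt h1, Real.sqrt_nonneg (q 0 + m₀)]
    case bound =>
      intro s hs hqs
      show q' s < 0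
      have hsmem := Set.Ico_subset_Icc_self hs
      have h1 := hineq s hsmem
      have hq0s := hq0 s hsmem
      set σ := Real.sqrt (q s + m₀) with hσ
      have hσsq : σ^2 = q s + m₀ := Real.sq_sqrt (by linarith)
      have hσgt : Vmax < σ := by
        rw [hσ, hqs]
        calc Vmax = Real.sqrt (Vmax^2) := (Real.sqrt_sq hVpos.le).symm
          _ < Real.sqrt (Vmax^2 - m₀ + ε + m₀) := Real.sqrt_lt_sqrt (by positivity) (by linarith)
      have hs0 : Real.sqrt m₀ ^ 2 = m₀ := Real.sq_sqrt hm₀.le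
      have hs0n : 0 ≤ Real.sqrt m₀ := Real.sqrt_nonneg _
      have hσpos : 0 < σ := lt_trans hVpos hσgt
      have h2 : 2 * β < lam * (σ - Real.sqrt m₀) := by
        have h3 : Real.sqrt m₀ + (2*β)/lam < σ := by
          have : (2/lam) * β = (2*β)/lam := by ring
          linarith [lt_of_le_of_lt hD hσgt, this ▸ le_refl ((2/lam) * β)]
        have := (div_lt_iff₀ hlam).1 (by linarith : (2*β)/lam < σ - Real.sqrt m₀)
        linarith
      have h4 : Real.sqrt (q s) ≤ σ := Real.sqrt_le_sqrt (by linarith)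
      have h5 : 0 ≤ Real.sqrt (q s) := Real.sqrt_nonneg _
      have : -lam * q s + 2 * Real.sqrt (q s) * β < 0 := by nlinarith
      linarith
  have hqT : q T ≤ Vmax^2 - m₀ := le_of_forall_pos_le_add fun ε hε => by linarith [key ε hε]
  calc Real.sqrt (q T + m₀) ≤ Real.sqrt (Vmax^2) := Real.sqrt_le_sqrt (by linarith)
    _ = Vmax := Real.sqrt_sq hVpos.le

/-- Theorem 2 of the paper, single mode-pair case (PWA system simulated by a PWA
abstraction): one mode `(A, B, C)` of the concrete PWA system with cell `{x : E x ≥ f}`,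
one mode `(F, G, H, L)` of the transformed PWA abstraction active on the region
`{x : E_c x ≥ f_c}` of the concrete state space, simulation relation `H = C P`,
`P F = A P + B Q`, interface gains `R, K`, joint cell bounding
`Ē = [[E, E P, -f], [E_c, E_c P, -f_c]]`, `M̄ = diag(M, m₀)`, `Λ̄ = diag(λ I_N, 0)`,
LMIs `M̄ - C̄ᵀ C̄ ⪰ 0` and `Āᵀ M̄ + M̄ Ā + Ē ᵀ W Ē + Λ̄ M̄ ⪯ 0`. Then along the closed
loop with the interface, with `E x₁(t) ≥ f` and `E_c x₁(t) ≥ f_c`, and `M`-weighted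
bounds `β₁, β₂, β₃` on `v₁, v₂, c'`, the output error satisfies
`‖C x₁(t) - H x₂(t)‖ ≤ max (κ V(ω̄(0))) (√m₀ + (2/λ)(β₁ + β₂ + β₃))` for all `t ≥ 0`. -/
theorem stmt_14 {n m p q k b l : ℕ}
    (A : Matrix (Fin n) (Fin n) ℝ) (B : Matrix (Fin n) (Fin p) ℝ)
    (C : Matrix (Fin k) (Fin n) ℝ)
    (E : Matrix (Fin b) (Fin n) ℝ) (f : Fin b → ℝ)
    (F : Matrix (Fin m) (Fin m) ℝ) (G : Matrix (Fin m) (Fin q) ℝ)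
    (H : Matrix (Fin k) (Fin m) ℝ) (L : Matrix (Fin q) (Fin m) ℝ)
    (Ec : Matrix (Fin l) (Fin n) ℝ) (fc : Fin l → ℝ)
    (P : Matrix (Fin n) (Fin m) ℝ) (Q : Matrix (Fin p) (Fin m) ℝ)
    (R : Matrix (Fin p) (Fin q) ℝ) (K : Matrix (Fin p) (Fin n) ℝ)
    (hH : H = C * P) (hPF : P * F = A * P + B * Q)
    (M : Matrix (Fin n ⊕ Fin m) (Fin n ⊕ Fin m) ℝ) (hM : M.PosDef)
    (m₀ lam κ : ℝ) (hm₀ : 0 < m₀) (hlam : 0 < lam) (hκ : 0 < κ)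
    (W : Matrix (Fin b ⊕ Fin l) (Fin b ⊕ Fin l) ℝ)
    (hW : W.IsSymm) (hWpos : ∀ i j, 0 ≤ W i j)
    (hCLMI : (Matrix.fromBlocks M 0 0 (Matrix.of fun _ _ => m₀)
        - (Matrix.fromCols (Matrix.fromCols C 0) 0 :
            Matrix (Fin k) ((Fin n ⊕ Fin m) ⊕ Unit) ℝ)ᵀ
          * (Matrix.fromCols (Matrix.fromCols C 0) 0 :
            Matrix (Fin k) ((Fin n ⊕ Fin m) ⊕ Unit) ℝ)).PosSemidef)
    (hLMI : (-((Matrix.fromBlocks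
            (Matrix.fromBlocks (A + B * K) 0 0 (F + G * L)) 0 0 0)ᵀ
          * Matrix.fromBlocks M 0 0 (Matrix.of fun _ _ => m₀)
        + Matrix.fromBlocks M 0 0 (Matrix.of fun _ _ => m₀)
          * Matrix.fromBlocks (Matrix.fromBlocks (A + B * K) 0 0 (F + G * L)) 0 0 0
        + (Matrix.fromRows
            (Matrix.fromCols (Matrix.fromCols E (E * P))
              (Matrix.of fun i (_ : Unit) => -(f i)))
            (Matrix.fromCols (Matrix.fromCols Ec (Ec * P))
              (Matrix.of fun i (_ : Unit) => -(fc i))))ᵀ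
          * W
          * Matrix.fromRows
            (Matrix.fromCols (Matrix.fromCols E (E * P))
              (Matrix.of fun i (_ : Unit) => -(f i)))
            (Matrix.fromCols (Matrix.fromCols Ec (Ec * P))
              (Matrix.of fun i (_ : Unit) => -(fc i)))
        + Matrix.fromBlocks (lam • (1 : Matrix (Fin n ⊕ Fin m) (Fin n ⊕ Fin m) ℝ)) 0 0 0
          * Matrix.fromBlocks M 0 0 (Matrix.of fun _ _ => m₀))).PosSemidef)
    (x₁ : ℝ → Fin n → ℝ) (x₂ : ℝ → Fin m → ℝ)
    (u₁ : ℝ → Fin p → ℝ) (ubar₂ : ℝ → Fin q → ℝ) (c : ℝ → Fin n → ℝ)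
    (β₁ β₂ β₃ : ℝ)
    (hx₁ : ∀ t ≥ (0 : ℝ), HasDerivAt x₁ (A *ᵥ x₁ t + B *ᵥ u₁ t + c t) t)
    (hu₁ : ∀ t ≥ (0 : ℝ),
      u₁ t = R *ᵥ ubar₂ t + (Q + R * L) *ᵥ x₂ t + K *ᵥ (x₁ t - P *ᵥ x₂ t))
    (hx₂ : ∀ t ≥ (0 : ℝ), HasDerivAt x₂ ((F + G * L) *ᵥ x₂ t + G *ᵥ ubar₂ t) t)
    (hcellE : ∀ t ≥ (0 : ℝ), ∀ i, f i ≤ (E *ᵥ x₁ t) i)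
    (hcellEc : ∀ t ≥ (0 : ℝ), ∀ i, fc i ≤ (Ec *ᵥ x₁ t) i)
    (hβ₁ : ∀ t ≥ (0 : ℝ),
      Real.sqrt (Sum.elim ((B * R - P * G) *ᵥ (L *ᵥ x₂ t)) 0 ⬝ᵥ
        M *ᵥ Sum.elim ((B * R - P * G) *ᵥ (L *ᵥ x₂ t)) 0) ≤ β₁)
    (hβ₂ : ∀ t ≥ (0 : ℝ),
      Real.sqrt (Sum.elim ((B * R - P * G) *ᵥ ubar₂ t) (G *ᵥ ubar₂ t) ⬝ᵥ
        M *ᵥ Sum.elim ((B * R - P * G) *ᵥ ubar₂ t) (G *ᵥ ubar₂ t)) ≤ β₂)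
    (hβ₃ : ∀ t ≥ (0 : ℝ),
      Real.sqrt (Sum.elim (c t) 0 ⬝ᵥ M *ᵥ Sum.elim (c t) 0) ≤ β₃) :
    ∀ t ≥ (0 : ℝ),
      ‖(EuclideanSpace.equiv (Fin k) ℝ).symm (C *ᵥ x₁ t - H *ᵥ x₂ t)‖ ≤
        max (κ * ((1 / κ) * Real.sqrt (aug (Sum.elim (x₁ 0 - P *ᵥ x₂ 0) (x₂ 0)) ⬝ᵥ
            Matrix.fromBlocks M 0 0 (Matrix.of fun _ _ => m₀) *ᵥ
              aug (Sum.elim (x₁ 0 - P *ᵥ x₂ 0) (x₂ 0)))))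
          (Real.sqrt m₀ + (2 / lam) * (β₁ + β₂ + β₃)) := by

  intro t₀ ht₀
  set Mb : Matrix ((Fin n ⊕ Fin m) ⊕ Unit) ((Fin n ⊕ Fin m) ⊕ Unit) ℝ :=
    Matrix.fromBlocks M 0 0 (Matrix.of fun _ _ => m₀) with hMbdef
  set A' : Matrix (Fin n ⊕ Fin m) (Fin n ⊕ Fin m) ℝ :=
    Matrix.fromBlocks (A + B * K) 0 0 (F + G * L) with hA'def
  set Eb : Matrix (Fin b ⊕ Fin l) ((Fin n ⊕ Fin m) ⊕ Unit) ℝ :=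
    Matrix.fromRows
      (Matrix.fromCols (Matrix.fromCols E (E * P)) (Matrix.of fun i (_ : Unit) => -(f i)))
      (Matrix.fromCols (Matrix.fromCols Ec (Ec * P)) (Matrix.of fun i (_ : Unit) => -(fc i)))
    with hEbdef
  set Cb : Matrix (Fin k) ((Fin n ⊕ Fin m) ⊕ Unit) ℝ :=
    Matrix.fromCols (Matrix.fromCols C 0) 0 with hCbdef
  set z : ℝ → (Fin n ⊕ Fin m) → ℝ := fun t => Sum.elim (x₁ t - P *ᵥ x₂ t) (x₂ t) with hzdef
  set d : ℝ → (Fin n ⊕ Fin m) → ℝ := fun t =>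
    Sum.elim ((B * R - P * G) *ᵥ (L *ᵥ x₂ t)) 0
      + (Sum.elim ((B * R - P * G) *ᵥ ubar₂ t) (G *ᵥ ubar₂ t)
      + Sum.elim (c t) 0) with hddef
  set zd : ℝ → (Fin n ⊕ Fin m) → ℝ := fun t => A' *ᵥ z t + d t with hzddef
  set Vq : ℝ → ℝ := fun t => z t ⬝ᵥ M *ᵥ z t with hVqdef
  have hMsymm : Mᵀ = M := by
    ext i j
    simpa using hM.1.apply i j
  have hMbsymm : Mbᵀ = Mb := by
    rw [hMbdef]
    ext i j
    rcases i with (i | i) <;> rcases j with (j | j) <;>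
      simp [Matrix.fromBlocks, Matrix.transpose_apply]
    exact congrFun (congrFun hMsymm i) j
  -- nonnegativity of the cell-bounding rows
  have hEb : ∀ t, 0 ≤ t → ∀ j, 0 ≤ (Eb *ᵥ aug (z t)) j := by
    intro t ht j
    have hxE : (Matrix.fromCols (Matrix.fromCols E (E * P))
          (Matrix.of fun i (_ : Unit) => -(f i))) *ᵥ
          Sum.elim (Sum.elim (x₁ t - P *ᵥ x₂ t) (x₂ t)) (fun _ => 1)
        = E *ᵥ x₁ t - f := by
      rw [Matrix.fromCols_mulVec_sumElim, Matrix.fromCols_mulVec_sumElim,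
        Matrix.mulVec_sub, Matrix.mulVec_mulVec]
      have hone : (Matrix.of fun i (_ : Unit) => -(f i)) *ᵥ (fun _ => (1:ℝ)) = -f := by
        funext i; simp [Matrix.mulVec, dotProduct]
      rw [hone]; abel
    have hxEc : (Matrix.fromCols (Matrix.fromCols Ec (Ec * P))
          (Matrix.of fun i (_ : Unit) => -(fc i))) *ᵥ
          Sum.elim (Sum.elim (x₁ t - P *ᵥ x₂ t) (x₂ t)) (fun _ => 1)
        = Ec *ᵥ x₁ t - fc := by
      rw [Matrix.fromCols_mulVec_sumElim, Matrix.fromCols_mulVec_sumElim,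
        Matrix.mulVec_sub, Matrix.mulVec_mulVec]
      have hone : (Matrix.of fun i (_ : Unit) => -(fc i)) *ᵥ (fun _ => (1:ℝ)) = -fc := by
        funext i; simp [Matrix.mulVec, dotProduct]
      rw [hone]; abel
    have h1 : Eb *ᵥ aug (z t) = Sum.elim (E *ᵥ x₁ t - f) (Ec *ᵥ x₁ t - fc) := by
      rw [hEbdef]
      show Matrix.fromRows _ _ *ᵥ Sum.elim (Sum.elim (x₁ t - P *ᵥ x₂ t) (x₂ t)) (fun _ => 1) = _
      rw [Matrix.fromRows_mulVec, hxE, hxEc]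
    rw [h1]
    rcases j with (j | j)
    · simpa using sub_nonneg.2 (hcellE t ht j)
    · simpa using sub_nonneg.2 (hcellEc t ht j)
  -- the closed-loop dynamics of z
  have hzderiv : ∀ t, 0 ≤ t → HasDerivAt z (zd t) t := by
    intro t ht
    have h1 := hasDerivAt_pi.1 (hx₁ t ht)
    have h2 := hasDerivAt_pi.1 (hx₂ t ht)
    have hPFv : P *ᵥ (F *ᵥ x₂ t) = A *ᵥ (P *ᵥ x₂ t) + B *ᵥ (Q *ᵥ x₂ t) := by
      rw [Matrix.mulVec_mulVec, Matrix.mulVec_mulVec, Matrix.mulVec_mulVec, hPF,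
        Matrix.add_mulVec]
    have hblk1 : A *ᵥ x₁ t + B *ᵥ u₁ t + c t
          - P *ᵥ ((F + G * L) *ᵥ x₂ t + G *ᵥ ubar₂ t)
        = (A + B * K) *ᵥ (x₁ t - P *ᵥ x₂ t)
          + ((B * R - P * G) *ᵥ (L *ᵥ x₂ t)
            + ((B * R - P * G) *ᵥ ubar₂ t + c t)) := by
      rw [hu₁ t ht]
      simp only [Matrix.mulVec_add, Matrix.mulVec_sub, Matrix.add_mulVec, Matrix.sub_mulVec,
        ← Matrix.mulVec_mulVec]
      rw [hPFv]
      abel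
    have hzdt : zd t = Sum.elim
        (A *ᵥ x₁ t + B *ᵥ u₁ t + c t - P *ᵥ ((F + G * L) *ᵥ x₂ t + G *ᵥ ubar₂ t))
        ((F + G * L) *ᵥ x₂ t + G *ᵥ ubar₂ t) := by
      rw [hzddef, hddef, hzdef, hA'def]
      show Matrix.fromBlocks _ _ _ _ *ᵥ Sum.elim (x₁ t - P *ᵥ x₂ t) (x₂ t) + _ = _
      rw [Matrix.fromBlocks_mulVec]
      funext j
      rcases j with (j | j)
      · have h := congrFun hblk1 j
        simp only [Pi.add_apply, Pi.sub_apply, Pi.zero_apply, Sum.elim_inl, Sum.elim_comp_inl,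
          Sum.elim_comp_inr, Matrix.zero_mulVec, add_zero, zero_add] at h ⊢
        linarith
      · simp only [Pi.add_apply, Pi.sub_apply, Pi.zero_apply, Sum.elim_inr, Sum.elim_comp_inl,
          Sum.elim_comp_inr, Matrix.zero_mulVec, add_zero, zero_add]
    rw [hzdt, hasDerivAt_pi]
    rintro (i | i)
    · have ha : HasDerivAt (fun s => x₁ s i - ∑ j, P i j * x₂ s j)
          ((A *ᵥ x₁ t + B *ᵥ u₁ t + c t) i
            - ∑ j, P i j * ((F + G * L) *ᵥ x₂ t + G *ᵥ ubar₂ t) j) t :=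
        (h1 i).sub (HasDerivAt.fun_sum fun j _ => (h2 j).const_mul (P i j))
      have hfun : (fun s => z s (Sum.inl i)) = fun s => x₁ s i - ∑ j, P i j * x₂ s j := by
        funext s
        rw [hzdef]
        simp [Matrix.mulVec, dotProduct]
      rw [hfun]
      exact ha
    · have hfun : (fun s => z s (Sum.inr i)) = fun s => x₂ s i := by
        funext s; rw [hzdef]; simp
      rw [hfun]
      simpa using h2 i
  -- derivative of the Lyapunov-like function
  have hVqD : ∀ t, 0 ≤ t → HasDerivAt Vq (2 * (z t ⬝ᵥ M *ᵥ zd t)) t := by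
    intro t ht
    have hcomp := hasDerivAt_pi.1 (hzderiv t ht)
    have hsum : HasDerivAt (fun s => ∑ i, z s i * ∑ j, M i j * z s j)
        (∑ i, (zd t i * ∑ j, M i j * z t j + z t i * ∑ j, M i j * zd t j)) t := by
      refine HasDerivAt.fun_sum fun i _ => ?_
      exact (hcomp i).mul (HasDerivAt.fun_sum fun j _ => (hcomp j).const_mul (M i j))
    have hfun : Vq = fun s => ∑ i, z s i * ∑ j, M i j * z s j := by
      funext s; rw [hVqdef]; simp [dotProduct, Matrix.mulVec]
    rw [hfun]
    convert hsum using 1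
    have hswap : zd t ⬝ᵥ M *ᵥ z t = z t ⬝ᵥ M *ᵥ zd t := by
      rw [dot_swap, hMsymm]
    have e1 : ∑ i, zd t i * ∑ j, M i j * z t j = zd t ⬝ᵥ M *ᵥ z t := by
      simp [dotProduct, Matrix.mulVec]
    have e2 : ∑ i, z t i * ∑ j, M i j * zd t j = z t ⬝ᵥ M *ᵥ zd t := by
      simp [dotProduct, Matrix.mulVec]
    rw [Finset.sum_add_distrib, e1, e2, hswap]
    ring
  -- the LMI gives the decay estimate
  have hkey : ∀ t, 0 ≤ t → z t ⬝ᵥ M *ᵥ (A' *ᵥ z t) ≤ -(lam / 2) * Vq t := by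
    intro t ht
    have h0 := hLMI.dotProduct_mulVec_nonneg (aug (z t))
    simp only [star_trivial] at h0
    rw [Matrix.neg_mulVec, dotProduct_neg] at h0
    rw [Matrix.add_mulVec, Matrix.add_mulVec, Matrix.add_mulVec, dotProduct_add,
      dotProduct_add, dotProduct_add] at h0
    have ha1 : aug (z t) ⬝ᵥ ((Matrix.fromBlocks A' 0 0 0)ᵀ * Mb) *ᵥ aug (z t)
        = aug (z t) ⬝ᵥ (Mb * Matrix.fromBlocks A' 0 0 0) *ᵥ aug (z t) := by
      have hT : ((Matrix.fromBlocks A' 0 0 0)ᵀ * Mb)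
          = (Mb * Matrix.fromBlocks A' 0 0 0)ᵀ := by
        rw [Matrix.transpose_mul, hMbsymm]
      rw [hT, aux_transpose_quad]
    have hAω : (Matrix.fromBlocks A' 0 0 0 :
          Matrix ((Fin n ⊕ Fin m) ⊕ Unit) ((Fin n ⊕ Fin m) ⊕ Unit) ℝ) *ᵥ aug (z t)
        = Sum.elim (A' *ᵥ z t) (0 : Unit → ℝ) := by
      show Matrix.fromBlocks _ _ _ _ *ᵥ Sum.elim (z t) (fun _ => 1) = _
      funext j
      rcases j with (j | j) <;>
        simp [Matrix.fromBlocks_mulVec, Sum.elim_comp_inl, Sum.elim_comp_inr]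
    have ha2 : aug (z t) ⬝ᵥ (Mb * Matrix.fromBlocks A' 0 0 0) *ᵥ aug (z t)
        = z t ⬝ᵥ M *ᵥ (A' *ᵥ z t) := by
      rw [← Matrix.mulVec_mulVec, hAω]
      have hMbω : Mb *ᵥ Sum.elim (A' *ᵥ z t) (0 : Unit → ℝ)
          = Sum.elim (M *ᵥ (A' *ᵥ z t)) (0 : Unit → ℝ) := by
        rw [hMbdef]
        funext j
        rcases j with (j | j) <;>
          simp [Matrix.fromBlocks_mulVec, Sum.elim_comp_inl, Sum.elim_comp_inr,
            Matrix.mulVec_zero]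
      rw [hMbω]
      show Sum.elim (z t) (fun _ => 1) ⬝ᵥ Sum.elim (M *ᵥ (A' *ᵥ z t)) (0 : Unit → ℝ) = _
      rw [sumElim_dotProduct_sumElim]
      simp
    have ha3 : 0 ≤ aug (z t) ⬝ᵥ (Ebᵀ * W * Eb) *ᵥ aug (z t) := by
      have hEq : aug (z t) ⬝ᵥ (Ebᵀ * W * Eb) *ᵥ aug (z t)
          = (Eb *ᵥ aug (z t)) ⬝ᵥ W *ᵥ (Eb *ᵥ aug (z t)) := by
        rw [← Matrix.mulVec_mulVec, ← Matrix.mulVec_mulVec, dot_swap,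
          Matrix.transpose_transpose, dotProduct_comm]
      rw [hEq]
      exact dotW_nonneg hWpos (hEb t ht)
    have ha4 : aug (z t) ⬝ᵥ
          (Matrix.fromBlocks (lam • (1 : Matrix (Fin n ⊕ Fin m) (Fin n ⊕ Fin m) ℝ)) 0 0 0 * Mb)
          *ᵥ aug (z t) = lam * Vq t := by
      have hmul : Matrix.fromBlocks (lam • (1 : Matrix (Fin n ⊕ Fin m) (Fin n ⊕ Fin m) ℝ)) 0 0 0
            * Mb = Matrix.fromBlocks (lam • M) 0 0 0 := by
        rw [hMbdef, Matrix.fromBlocks_multiply]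
        simp [smul_mul_assoc]
      rw [hmul]
      have h1 : (Matrix.fromBlocks (lam • M) 0 0 0 :
            Matrix ((Fin n ⊕ Fin m) ⊕ Unit) ((Fin n ⊕ Fin m) ⊕ Unit) ℝ) *ᵥ aug (z t)
          = Sum.elim ((lam • M) *ᵥ z t) (0 : Unit → ℝ) := by
        show Matrix.fromBlocks _ _ _ _ *ᵥ Sum.elim (z t) (fun _ => 1) = _
        funext j
        rcases j with (j | j) <;>
          simp [Matrix.fromBlocks_mulVec, Sum.elim_comp_inl, Sum.elim_comp_inr]
      rw [h1]
      show Sum.elim (z t) (fun _ => 1) ⬝ᵥ Sum.elim ((lam • M) *ᵥ z t) (0 : Unit → ℝ) = _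
      rw [sumElim_dotProduct_sumElim]
      simp only [Matrix.smul_mulVec, dotProduct_smul, smul_eq_mul, hVqdef]
      simp
    rw [ha1, ha2, ha4] at h0
    linarith
  -- Cauchy–Schwarz bounds on the disturbance terms
  have hDle : ∀ t, 0 ≤ t → 2 * (z t ⬝ᵥ M *ᵥ zd t)
      ≤ -lam * Vq t + 2 * Real.sqrt (Vq t) * (β₁ + β₂ + β₃) := by
    intro t ht
    have e1 : z t ⬝ᵥ M *ᵥ zd t
        = z t ⬝ᵥ M *ᵥ (A' *ᵥ z t)
          + (z t ⬝ᵥ M *ᵥ Sum.elim ((B * R - P * G) *ᵥ (L *ᵥ x₂ t)) 0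
            + (z t ⬝ᵥ M *ᵥ Sum.elim ((B * R - P * G) *ᵥ ubar₂ t) (G *ᵥ ubar₂ t)
              + z t ⬝ᵥ M *ᵥ Sum.elim (c t) 0)) := by
      show z t ⬝ᵥ M *ᵥ (A' *ᵥ z t
          + (Sum.elim ((B * R - P * G) *ᵥ (L *ᵥ x₂ t)) 0
            + (Sum.elim ((B * R - P * G) *ᵥ ubar₂ t) (G *ᵥ ubar₂ t)
              + Sum.elim (c t) 0))) = _
      rw [Matrix.mulVec_add, Matrix.mulVec_add, Matrix.mulVec_add, dotProduct_add,
        dotProduct_add, dotProduct_add]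
    have hq : Real.sqrt (z t ⬝ᵥ M *ᵥ z t) = Real.sqrt (Vq t) := by rw [hVqdef]
    have c1 : z t ⬝ᵥ M *ᵥ Sum.elim ((B * R - P * G) *ᵥ (L *ᵥ x₂ t)) 0
        ≤ Real.sqrt (Vq t) * β₁ := by
      refine (aux_cs hM.posSemidef _ _).trans ?_
      rw [hq]
      exact mul_le_mul_of_nonneg_left (hβ₁ t ht) (Real.sqrt_nonneg _)
    have c2 : z t ⬝ᵥ M *ᵥ Sum.elim ((B * R - P * G) *ᵥ ubar₂ t) (G *ᵥ ubar₂ t)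
        ≤ Real.sqrt (Vq t) * β₂ := by
      refine (aux_cs hM.posSemidef _ _).trans ?_
      rw [hq]
      exact mul_le_mul_of_nonneg_left (hβ₂ t ht) (Real.sqrt_nonneg _)
    have c3 : z t ⬝ᵥ M *ᵥ Sum.elim (c t) 0 ≤ Real.sqrt (Vq t) * β₃ := by
      refine (aux_cs hM.posSemidef _ _).trans ?_
      rw [hq]
      exact mul_le_mul_of_nonneg_left (hβ₃ t ht) (Real.sqrt_nonneg _)
    have hk := hkey t ht
    rw [e1]
    ring_nf
    nlinarith [hk, c1, c2, c3]
  have hb1 : 0 ≤ β₁ := le_trans (Real.sqrt_nonneg _) (hβ₁ 0 le_rfl)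
  have hb2 : 0 ≤ β₂ := le_trans (Real.sqrt_nonneg _) (hβ₂ 0 le_rfl)
  have hb3 : 0 ≤ β₃ := le_trans (Real.sqrt_nonneg _) (hβ₃ 0 le_rfl)
  have hcompare := comparison (q := Vq) (q' := fun s => 2 * (z s ⬝ᵥ M *ᵥ zd s)) (T := t₀)
    (lam := lam) (β := β₁ + β₂ + β₃) (m₀ := m₀) ht₀ hlam (by linarith) hm₀
    (fun s hs => hVqD s hs.1) (fun s hs => aux_dot_nonneg hM.posSemidef _)
    (fun s hs => hDle s hs.1)
  -- output error bound from the first LMI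
  have hout : (C *ᵥ x₁ t₀ - H *ᵥ x₂ t₀) ⬝ᵥ (C *ᵥ x₁ t₀ - H *ᵥ x₂ t₀) ≤ Vq t₀ + m₀ := by
    have h0 := hCLMI.dotProduct_mulVec_nonneg (aug (z t₀))
    simp only [star_trivial] at h0
    rw [Matrix.sub_mulVec, dotProduct_sub] at h0
    have e2 : aug (z t₀) ⬝ᵥ Mb *ᵥ aug (z t₀) = Vq t₀ + m₀ := by
      rw [hMbdef, aug_quad]
    have e3 : aug (z t₀) ⬝ᵥ (Cbᵀ * Cb) *ᵥ aug (z t₀)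
        = (Cb *ᵥ aug (z t₀)) ⬝ᵥ (Cb *ᵥ aug (z t₀)) := by
      rw [← Matrix.mulVec_mulVec, dot_swap, Matrix.transpose_transpose]
    have e4 : Cb *ᵥ aug (z t₀) = C *ᵥ x₁ t₀ - H *ᵥ x₂ t₀ := by
      rw [hH, hCbdef]
      show Matrix.fromCols (Matrix.fromCols C 0) 0 *ᵥ
        Sum.elim (Sum.elim (x₁ t₀ - P *ᵥ x₂ t₀) (x₂ t₀)) (fun _ => 1) = _
      rw [Matrix.fromCols_mulVec_sumElim, Matrix.fromCols_mulVec_sumElim,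
        Matrix.mulVec_sub, Matrix.mulVec_mulVec]
      simp [Matrix.zero_mulVec]
    rw [e2, e3, e4] at h0
    linarith
  -- assemble
  have hnorm : ‖(EuclideanSpace.equiv (Fin k) ℝ).symm (C *ᵥ x₁ t₀ - H *ᵥ x₂ t₀)‖
      = Real.sqrt ((C *ᵥ x₁ t₀ - H *ᵥ x₂ t₀) ⬝ᵥ (C *ᵥ x₁ t₀ - H *ᵥ x₂ t₀)) := by
    rw [EuclideanSpace.norm_eq]
    congr 1
    simp [dotProduct, Real.norm_eq_abs, sq_abs, pow_two]
  have hgoalRHS : κ * ((1 / κ) * Real.sqrt (aug (Sum.elim (x₁ 0 - P *ᵥ x₂ 0) (x₂ 0)) ⬝ᵥ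
        Mb *ᵥ aug (Sum.elim (x₁ 0 - P *ᵥ x₂ 0) (x₂ 0)))) = Real.sqrt (Vq 0 + m₀) := by
    have e0 : aug (Sum.elim (x₁ 0 - P *ᵥ x₂ 0) (x₂ 0)) ⬝ᵥ
        Mb *ᵥ aug (Sum.elim (x₁ 0 - P *ᵥ x₂ 0) (x₂ 0)) = Vq 0 + m₀ := by
      rw [hMbdef, aug_quad]
    rw [e0]
    field_simp
  rw [hnorm, hgoalRHS]
  calc Real.sqrt ((C *ᵥ x₁ t₀ - H *ᵥ x₂ t₀) ⬝ᵥ (C *ᵥ x₁ t₀ - H *ᵥ x₂ t₀))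
      ≤ Real.sqrt (Vq t₀ + m₀) := Real.sqrt_le_sqrt hout
    _ ≤ max (Real.sqrt (Vq 0 + m₀)) (Real.sqrt m₀ + (2 / lam) * (β₁ + β₂ + β₃)) := hcompare
end
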